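/- For every real σ with σ < 1 and σ ≠ 0, and every y ∈ ℝ, one has ((1+y²)^{σ/2}·cos(σ·arctan(y)) − 1)/σ ≥ 0. Equivalently, Re((1−iy)^σ) ≥ 1 when σ ∈ (0,1), and Re((1−iy)^σ) ≤ 1 when σ < 0, where (1−iy)^σ is the principal complex power. -/

import Mathlib

open Real Set

/-- Key inequality: for `σ ∈ [0,1]` and `θ ∈ [-π/2, π/2]`, `cos θ ^ σ ≤ cos (σθ)`. -/
lemma cos_rpow_le_cos_mul {σ : ℝ} (h0 : 0 ≤ σ) (h1 : σ ≤ 1) {θ : ℝ}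
    (hθ : θ ∈ Set.Icc (-(π/2)) (π/2)) : Real.cos θ ^ σ ≤ Real.cos (σ * θ) := by
  have hpi : (0:ℝ) < π := Real.pi_pos
  have hmem0 : (0:ℝ) ∈ Set.Icc (-(π/2)) (π/2) := by constructor <;> linarith
  have hconc : (1 - σ) • Real.cos 0 + σ • Real.cos θ ≤ Real.cos ((1 - σ) • (0:ℝ) + σ • θ) :=
    strictConcaveOn_cos_Icc.concaveOn.2 hmem0 hθ (by linarith) h0 (by ring)
  simp only [smul_eq_mul, mul_zero, Real.cos_zero, mul_one, zero_add] at hconc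
  have hb : Real.cos θ ^ σ ≤ 1 + σ * (Real.cos θ - 1) := by
    have := rpow_one_add_le_one_add_mul_self (s := Real.cos θ - 1)
      (by nlinarith [Real.cos_nonneg_of_mem_Icc hθ]) h0 h1
    simpa using this
  nlinarith [hconc, hb]

/-- for σ < 1, σ ≠ 0 and y ∈ ℝ,
((1+y²)^{σ/2}·cos(σ·arctan y) − 1)/σ ≥ 0; equivalently Re((1−iy)^σ) ≥ 1 for σ ∈ (0,1)
and Re((1−iy)^σ) ≤ 1 for σ < 0 (principal complex power). -/
theorem f_sigma_nonneg (σ : ℝ) (hσ1 : σ < 1) (hσ0 : σ ≠ 0) (y : ℝ) :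
    0 ≤ ((1 + y ^ 2) ^ (σ / 2) * Real.cos (σ * Real.arctan y) - 1) / σ ∧
    (0 < σ → 1 ≤ ((1 - Complex.I * (y : ℂ)) ^ (σ : ℂ)).re) ∧
    (σ < 0 → ((1 - Complex.I * (y : ℂ)) ^ (σ : ℂ)).re ≤ 1) := by
  set θ := Real.arctan y with hθdef
  have hθmem : θ ∈ Set.Icc (-(π/2)) (π/2) :=
    ⟨(Real.neg_pi_div_two_lt_arctan y).le, (Real.arctan_lt_pi_div_two y).le⟩
  have h1y : (0:ℝ) < 1 + y ^ 2 := by positivity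
  set A := Real.sqrt (1 + y ^ 2) with hAdef
  have hA0 : 0 < A := Real.sqrt_pos.mpr h1y
  have hA1 : 1 ≤ A := by
    rw [hAdef]
    exact Real.le_sqrt_of_sq_le (by nlinarith)
  have hcos : Real.cos θ = A⁻¹ := by
    rw [hθdef, Real.cos_arctan, one_div, hAdef]
  have hE : (1 + y ^ 2) ^ (σ / 2) = A ^ σ := by
    rw [hAdef, Real.sqrt_eq_rpow, ← Real.rpow_mul h1y.le]
    ring_nf
  have hkey : 0 < σ → 1 ≤ A ^ σ * Real.cos (σ * θ) := by
    intro hσp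
    have h1 : Real.cos θ ^ σ ≤ Real.cos (σ * θ) := cos_rpow_le_cos_mul hσp.le hσ1.le hθmem
    have h2 : A ^ σ * Real.cos θ ^ σ = 1 := by
      rw [hcos, ← Real.mul_rpow hA0.le (inv_nonneg.mpr hA0.le), mul_inv_cancel₀ hA0.ne',
        Real.one_rpow]
    calc (1:ℝ) = A ^ σ * Real.cos θ ^ σ := h2.symm
      _ ≤ A ^ σ * Real.cos (σ * θ) :=
          mul_le_mul_of_nonneg_left h1 (Real.rpow_nonneg hA0.le σ)
  have hneg : σ < 0 → A ^ σ * Real.cos (σ * θ) ≤ 1 := by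
    intro hσn
    have hAσ : A ^ σ ≤ 1 := Real.rpow_le_one_of_one_le_of_nonpos hA1 hσn.le
    calc A ^ σ * Real.cos (σ * θ) ≤ A ^ σ * 1 :=
          mul_le_mul_of_nonneg_left (Real.cos_le_one _) (Real.rpow_nonneg hA0.le σ)
      _ ≤ 1 := by simpa using hAσ
  have hz : (1 - Complex.I * (y:ℂ)) ≠ 0 := by
    intro h
    have := congrArg Complex.re h
    simp at this
  have habs : ‖(1 - Complex.I * (y:ℂ))‖ = A := by
    rw [Complex.norm_def, Complex.normSq_apply, hAdef]
    simp
    ring_nf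
  have harg : Complex.arg (1 - Complex.I * (y:ℂ)) = -θ := by
    rw [Complex.arg_of_re_nonneg (by simp), habs]
    simp only [Complex.sub_im, Complex.one_im, Complex.mul_im, Complex.I_re, Complex.ofReal_im,
      Complex.I_im, Complex.ofReal_re, zero_mul, one_mul, zero_add, zero_sub]
    rw [hθdef, Real.arctan_eq_arcsin, hAdef, neg_div, Real.arcsin_neg]
  have hre : ((1 - Complex.I * (y : ℂ)) ^ (σ : ℂ)).re = A ^ σ * Real.cos (σ * θ) := by
    rw [Complex.cpow_def_of_ne_zero hz, Complex.exp_re]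
    have h1 : (Complex.log (1 - Complex.I * (y:ℂ)) * (σ:ℂ)).re = Real.log A * σ := by
      simp [Complex.mul_re, Complex.log_re, habs]
    have h2 : (Complex.log (1 - Complex.I * (y:ℂ)) * (σ:ℂ)).im = -θ * σ := by
      simp [Complex.mul_im, Complex.log_im, harg]
    rw [h1, h2, Real.rpow_def_of_pos hA0]
    rw [show -θ * σ = -(σ * θ) by ring, Real.cos_neg]
  refine ⟨?_, ?_, ?_⟩
  · rcases hσ0.lt_or_gt with hn | hp
    · apply div_nonneg_iff.mpr
      refine Or.inr ⟨?_, hn.le⟩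
      have := hneg hn
      rw [hE]
      linarith
    · apply div_nonneg _ hp.le
      have := hkey hp
      rw [hE]
      linarith
  · intro hp; rw [hre]; exact hkey hp
  · intro hn; rw [hre]; exact hneg hn
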